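/- Let A be an n×n real matrix with u^T A u ≥ κ₀² |u|² for all u ∈ ℝ^n (κ₀ > 0), and let α satisfy 0 < α < κ₀² / ‖A‖, where ‖A‖ is the operator norm. Define F(u) = |u|^α A u. Then there exists a constant C > 0 such that (F(u) - F(v))·(u - v) ≥ C |u - v|^{α+2} for all u, v ∈ ℝ^n; in fact one may take C = (κ₀² − α‖A‖) / (2^{α+1}(α+1)). -/

import Mathlib

open Matrix

/-- Homogeneous Young inequality form. -/
lemma young_aux {α a b : ℝ} (hα : 0 < α) (hb : 0 ≤ b) (hab : b ≤ a) :
    (a ^ α - b ^ α) * b ≤ α * a ^ α * (a - b) := by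
  have ha : 0 ≤ a := hb.trans hab
  have hpq : ((α + 1) / α).HolderConjugate (α + 1) := by
    rw [Real.holderConjugate_iff]; constructor
    · rw [lt_div_iff₀ hα]; linarith
    · field_simp
  have hY := Real.young_inequality_of_nonneg (Real.rpow_nonneg ha α) hb hpq
  have hα1 : (0:ℝ) < α + 1 := by linarith
  have hm : α * ((α + 1) / α) = α + 1 := by field_simp
  have h1 : a ^ (α+1) = a^α * a := by
    rw [Real.rpow_add' ha (by positivity), Real.rpow_one]
  have h2 : b ^ (α+1) = b^α * b := by
    rw [Real.rpow_add' hb (by positivity), Real.rpow_one]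
  rw [← Real.rpow_mul ha, hm, h1, h2, div_div_eq_mul_div] at hY
  rw [← add_div, le_div_iff₀ hα1] at hY
  nlinarith [hY]

lemma mulVec_eq_toEuclideanCLM {n : ℕ} (A : Matrix (Fin n) (Fin n) ℝ)
    (x : EuclideanSpace ℝ (Fin n)) :
    (WithLp.toLp 2 (A.mulVec x) : EuclideanSpace ℝ (Fin n)) =
      Matrix.toEuclideanCLM (𝕜 := ℝ) (n := Fin n) A x := by
  refine (WithLp.equiv 2 (Fin n → ℝ)).injective ?_
  rfl

open scoped RealInnerProductSpace in
lemma key_mono {n : ℕ} (A : Matrix (Fin n) (Fin n) ℝ) (κ α M : ℝ)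
    (hα : 0 < α) (hκM : 0 < κ ^ 2 - α * M) (hMnn : 0 ≤ M)
    (hM' : M = ‖Matrix.toEuclideanCLM (𝕜 := ℝ) (n := Fin n) A‖)
    (hco : ∀ u : EuclideanSpace ℝ (Fin n),
      κ ^ 2 * ‖u‖ ^ 2 ≤ @inner ℝ (EuclideanSpace ℝ (Fin n)) _ u
        (WithLp.toLp 2 (A.mulVec u) : EuclideanSpace ℝ (Fin n)))
    (u v : EuclideanSpace ℝ (Fin n)) (hle : ‖v‖ ≤ ‖u‖) :
    (κ ^ 2 - α * M) / (2 ^ (α + 1) * (α + 1)) * ‖u - v‖ ^ (α + 2) ≤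
      @inner ℝ (EuclideanSpace ℝ (Fin n)) _
        ((‖u‖ ^ α • (WithLp.toLp 2 (A.mulVec u) : EuclideanSpace ℝ (Fin n))) -
          (‖v‖ ^ α • (WithLp.toLp 2 (A.mulVec v) : EuclideanSpace ℝ (Fin n)))) (u - v) := by
  set T := Matrix.toEuclideanCLM (𝕜 := ℝ) (n := Fin n) A with hTdef
  have hT : ∀ x : EuclideanSpace ℝ (Fin n),
      (WithLp.toLp 2 (A.mulVec x) : EuclideanSpace ℝ (Fin n)) = T x :=
    mulVec_eq_toEuclideanCLM A
  rw [hT, hT]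
  set w : EuclideanSpace ℝ (Fin n) := u - v with hw
  have ha : (0:ℝ) ≤ ‖u‖ := norm_nonneg _
  have hb : (0:ℝ) ≤ ‖v‖ := norm_nonneg _
  have hW : (0:ℝ) ≤ ‖w‖ := norm_nonneg _
  have hanσυ : (0:ℝ) ≤ ‖u‖ ^ α := Real.rpow_nonneg ha α
  have hsplit : ‖u‖ ^ α • T u - ‖v‖ ^ α • T v =
      ‖u‖ ^ α • T w + (‖u‖ ^ α - ‖v‖ ^ α) • T v := by
    rw [hw, map_sub]; module
  have hinner : ⟪‖u‖ ^ α • T u - ‖v‖ ^ α • T v, w⟫ =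
      ‖u‖ ^ α * ⟪T w, w⟫ + (‖u‖ ^ α - ‖v‖ ^ α) * ⟪T v, w⟫ := by
    rw [hsplit, inner_add_left, real_inner_smul_left, real_inner_smul_left]
  have h1 : κ ^ 2 * ‖w‖ ^ 2 ≤ ⟪T w, w⟫ := by
    rw [← hT, real_inner_comm]; exact hco w
  have h2 : |⟪T v, w⟫| ≤ M * (‖v‖ * ‖w‖) := by
    calc |⟪T v, w⟫| ≤ ‖T v‖ * ‖w‖ := abs_real_inner_le_norm _ _
      _ ≤ (M * ‖v‖) * ‖w‖ := by
          apply mul_le_mul_of_nonneg_right _ hW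
          rw [hM']; exact T.le_opNorm v
      _ = M * (‖v‖ * ‖w‖) := by ring
  have h3 : 0 ≤ ‖u‖ ^ α - ‖v‖ ^ α := by
    have := Real.rpow_le_rpow hb hle hα.le; linarith
  have h4 : (‖u‖ ^ α - ‖v‖ ^ α) * ‖v‖ ≤ α * ‖u‖ ^ α * (‖u‖ - ‖v‖) :=
    young_aux hα hb hle
  have h5 : ‖u‖ - ‖v‖ ≤ ‖w‖ := norm_sub_norm_le u v
  have h6 : ‖w‖ ≤ 2 * ‖u‖ := by
    have := norm_sub_le u v; rw [← hw] at this; linarith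
  have h45 : (‖u‖ ^ α - ‖v‖ ^ α) * ‖v‖ ≤ α * ‖u‖ ^ α * ‖w‖ := by
    refine h4.trans ?_
    have hpos : 0 ≤ α * ‖u‖ ^ α := by positivity
    nlinarith
  have e1 : ‖u‖ ^ α * (κ ^ 2 * ‖w‖ ^ 2) ≤ ‖u‖ ^ α * ⟪T w, w⟫ :=
    mul_le_mul_of_nonneg_left h1 hanσυ
  have e2 : -((‖u‖ ^ α - ‖v‖ ^ α) * (M * (‖v‖ * ‖w‖))) ≤
      (‖u‖ ^ α - ‖v‖ ^ α) * ⟪T v, w⟫ := by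
    have hneg : -(M * (‖v‖ * ‖w‖)) ≤ ⟪T v, w⟫ := (abs_le.mp h2).1
    calc -((‖u‖ ^ α - ‖v‖ ^ α) * (M * (‖v‖ * ‖w‖)))
        = (‖u‖ ^ α - ‖v‖ ^ α) * (-(M * (‖v‖ * ‖w‖))) := by ring
      _ ≤ (‖u‖ ^ α - ‖v‖ ^ α) * ⟪T v, w⟫ := mul_le_mul_of_nonneg_left hneg h3
  have e3 : (‖u‖ ^ α - ‖v‖ ^ α) * (M * (‖v‖ * ‖w‖)) ≤
      α * ‖u‖ ^ α * ‖w‖ * (M * ‖w‖) := by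
    have hrw : (‖u‖ ^ α - ‖v‖ ^ α) * (M * (‖v‖ * ‖w‖)) =
        ((‖u‖ ^ α - ‖v‖ ^ α) * ‖v‖) * (M * ‖w‖) := by ring
    rw [hrw]
    exact mul_le_mul_of_nonneg_right h45 (by positivity)
  have h7 : ‖w‖ ^ α / 2 ^ α ≤ ‖u‖ ^ α := by
    have hle2 : ‖w‖ / 2 ≤ ‖u‖ := by linarith
    have := Real.rpow_le_rpow (by positivity) hle2 hα.le
    rwa [Real.div_rpow hW (by norm_num)] at this
  have h8 : ‖w‖ ^ (α + 2) = ‖w‖ ^ α * ‖w‖ ^ 2 := by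
    rw [show (α + 2 : ℝ) = α + ((2:ℕ):ℝ) by push_cast; ring,
      Real.rpow_add' hW (by positivity), Real.rpow_natCast]
  have h2apos : (0:ℝ) < 2 ^ α := Real.rpow_pos_of_pos (by norm_num) α
  have hd : (2:ℝ) ^ α ≤ 2 ^ (α + 1) * (α + 1) := by
    rw [Real.rpow_add (by norm_num), Real.rpow_one]
    nlinarith
  calc (κ ^ 2 - α * M) / (2 ^ (α + 1) * (α + 1)) * ‖w‖ ^ (α + 2)
      ≤ (κ ^ 2 - α * M) / 2 ^ α * ‖w‖ ^ (α + 2) := by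
        apply mul_le_mul_of_nonneg_right _ (Real.rpow_nonneg hW _)
        exact div_le_div_of_nonneg_left hκM.le h2apos hd
    _ = (κ ^ 2 - α * M) * (‖w‖ ^ α / 2 ^ α * ‖w‖ ^ 2) := by rw [h8]; ring
    _ ≤ (κ ^ 2 - α * M) * (‖u‖ ^ α * ‖w‖ ^ 2) := by
        apply mul_le_mul_of_nonneg_left _ hκM.le
        exact mul_le_mul_of_nonneg_right h7 (sq_nonneg _)
    _ ≤ ‖u‖ ^ α * ⟪T w, w⟫ + (‖u‖ ^ α - ‖v‖ ^ α) * ⟪T v, w⟫ := by nlinarith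
    _ = _ := hinner.symm

theorem power_monotone_of_small_alpha {n : ℕ}
    (A : Matrix (Fin n) (Fin n) ℝ) (κ : ℝ) (hκ : 0 < κ)
    (hco : ∀ u : EuclideanSpace ℝ (Fin n), κ ^ 2 * ‖u‖ ^ 2 ≤ u ⬝ᵥ A.mulVec u)
    (α : ℝ) (hα : 0 < α)
    (hαA : α < κ ^ 2 / ‖Matrix.toEuclideanCLM (𝕜 := ℝ) (n := Fin n) A‖) :
    0 < (κ ^ 2 - α * ‖Matrix.toEuclideanCLM (𝕜 := ℝ) (n := Fin n) A‖) /
        (2 ^ (α + 1) * (α + 1)) ∧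
      ∀ u v : EuclideanSpace ℝ (Fin n),
        (κ ^ 2 - α * ‖Matrix.toEuclideanCLM (𝕜 := ℝ) (n := Fin n) A‖) /
            (2 ^ (α + 1) * (α + 1)) * ‖u - v‖ ^ (α + 2) ≤
          @inner ℝ (EuclideanSpace ℝ (Fin n)) _
            ((‖u‖ ^ α • (WithLp.toLp 2 (A.mulVec u) : EuclideanSpace ℝ (Fin n))) -
              (‖v‖ ^ α • (WithLp.toLp 2 (A.mulVec v) : EuclideanSpace ℝ (Fin n)))) (u - v) := by
  set M := ‖Matrix.toEuclideanCLM (𝕜 := ℝ) (n := Fin n) A‖ with hMdef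
  have hM0 : (0:ℝ) ≤ M := norm_nonneg _
  have hM : 0 < M := by
    rcases hM0.lt_or_eq with h | h
    · exact h
    · rw [← h, div_zero] at hαA; linarith
  have hκM : 0 < κ ^ 2 - α * M := by
    have := (lt_div_iff₀ hM).mp hαA; linarith
  have hco' : ∀ u : EuclideanSpace ℝ (Fin n),
      κ ^ 2 * ‖u‖ ^ 2 ≤ @inner ℝ (EuclideanSpace ℝ (Fin n)) _ u
        (WithLp.toLp 2 (A.mulVec u) : EuclideanSpace ℝ (Fin n)) := by
    intro u
    have h := hco u
    simpa [dotProduct, PiLp.inner_apply, RCLike.inner_apply, conj_trivial, mul_comm] using h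
  refine ⟨div_pos hκM (by positivity), fun u v => ?_⟩
  rcases le_total ‖v‖ ‖u‖ with h | h
  · exact key_mono A κ α M hα hκM hM0 hMdef hco' u v h
  · have hkey := key_mono A κ α M hα hκM hM0 hMdef hco' v u h
    rw [norm_sub_rev v u] at hkey
    refine hkey.trans (le_of_eq ?_)
    rw [← inner_neg_neg (𝕜 := ℝ)]
    congr 1 <;> abel
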